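/- Two distinct catenaries of the form y(x) = a·cosh((x - x0)/a) + y0 (with possibly different parameters a1, x01, y01 and a2, x02, y02, both a1, a2 > 0) that hang from the same two suspension points A = (xA, hA) and B = (xB, hB) with xA < xB cannot coincide at any third point strictly between xA and xB unless they are identical on [xA, xB]; equivalently, two distinct such catenaries through the same endpoints have at most the two endpoint intersections in [xA, xB]. -/

import Mathlib

theorem catenaries_no_third_intersection
    (a1 x01 y01 a2 x02 y02 xA xB hA hB : ℝ)
    (ha1 : 0 < a1) (ha2 : 0 < a2) (hx : xA < xB)
    (C1 C2 : ℝ → ℝ)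
    (hC1 : ∀ x, C1 x = a1 * Real.cosh ((x - x01) / a1) + y01)
    (hC2 : ∀ x, C2 x = a2 * Real.cosh ((x - x02) / a2) + y02)
    (hA1 : C1 xA = hA) (hA2 : C2 xA = hA)
    (hB1 : C1 xB = hB) (hB2 : C2 xB = hB)
    (hdist : ∃ x ∈ Set.Ioo xA xB, C1 x ≠ C2 x) :
    ∀ x ∈ Set.Ioo xA xB, C1 x ≠ C2 x := by
  obtain ⟨z, hz, hzne⟩ := hdist
  intro c hc heq
  set F : ℝ → ℝ := fun x =>
    a1 * Real.cosh ((x - x01) / a1) + y01 - (a2 * Real.cosh ((x - x02) / a2) + y02) with hF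
  have hFC : ∀ x, F x = C1 x - C2 x := by intro x; simp [hF, hC1, hC2]
  have hderiv : ∀ x : ℝ,
      HasDerivAt F (Real.sinh ((x - x01) / a1) - Real.sinh ((x - x02) / a2)) x := by
    intro x
    have h1 : HasDerivAt (fun x => a1 * Real.cosh ((x - x01) / a1) + y01)
        (Real.sinh ((x - x01) / a1)) x := by
      have hi : HasDerivAt (fun x : ℝ => (x - x01) / a1) (1 / a1) x :=
        ((hasDerivAt_id x).sub_const x01).div_const a1
      have h := (((Real.hasDerivAt_cosh ((x - x01) / a1)).comp x hi).const_mul a1).add_const y01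
      rw [show a1 * (Real.sinh ((x - x01) / a1) * (1 / a1)) = Real.sinh ((x - x01) / a1) by field_simp [ha1.ne']] at h
      exact h
    have h2 : HasDerivAt (fun x => a2 * Real.cosh ((x - x02) / a2) + y02)
        (Real.sinh ((x - x02) / a2)) x := by
      have hi : HasDerivAt (fun x : ℝ => (x - x02) / a2) (1 / a2) x :=
        ((hasDerivAt_id x).sub_const x02).div_const a2
      have h := (((Real.hasDerivAt_cosh ((x - x02) / a2)).comp x hi).const_mul a2).add_const y02
      rw [show a2 * (Real.sinh ((x - x02) / a2) * (1 / a2)) = Real.sinh ((x - x02) / a2) by field_simp [ha2.ne']] at h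
      exact h
    exact h1.sub h2
  have hFcont : Continuous F := by
    rw [continuous_iff_continuousAt]; exact fun x => (hderiv x).continuousAt
  have hFa : F xA = 0 := by rw [hFC, hA1, hA2]; ring
  have hFb : F xB = 0 := by rw [hFC, hB1, hB2]; ring
  have hFc : F c = 0 := by rw [hFC, heq]; ring
  obtain ⟨d1, hd1, hd1'⟩ := exists_hasDerivAt_eq_zero hc.1 hFcont.continuousOn
    (hFa.trans hFc.symm) (fun x _ => hderiv x)
  obtain ⟨d2, hd2, hd2'⟩ := exists_hasDerivAt_eq_zero hc.2 hFcont.continuousOn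
    (hFc.trans hFb.symm) (fun x _ => hderiv x)
  have e1 : (d1 - x01) / a1 = (d1 - x02) / a2 :=
    Real.sinh_injective (sub_eq_zero.mp hd1')
  have e2 : (d2 - x01) / a1 = (d2 - x02) / a2 :=
    Real.sinh_injective (sub_eq_zero.mp hd2')
  have hd12 : d1 < d2 := lt_trans hd1.2 hd2.1
  field_simp [ha1.ne', ha2.ne'] at e1 e2
  have haa : a1 = a2 := by
    have h0 : (a2 - a1) * (d1 - d2) = 0 := by nlinarith [e1, e2]
    rcases mul_eq_zero.mp h0 with h | h
    · linarith
    · linarith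
  have hxx : x01 = x02 := by
    rw [← haa] at e1
    have : x01 * a1 = x02 * a1 := by linarith
    exact mul_right_cancel₀ ha1.ne' this
  have hyy : y01 = y02 := by
    have h := hA1.trans hA2.symm
    rw [hC1, hC2, ← haa, ← hxx] at h
    linarith
  apply hzne
  rw [hC1, hC2, ← haa, ← hxx, ← hyy]
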